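/- Let K be a nonempty compact metrizable topological space, let J : [0,∞) × K → ℝ be such that for every t ≥ 0 the function η ↦ J(t,η) is continuous on K, and let ω : [0,∞) → ℝ satisfy ω(T) → 0 as T → ∞ and J(t,η) ≤ J(T,η) + ω(T) for all η ∈ K and all 0 ≤ T ≤ t. Then there exist u⁰ ∈ K and an extended real number l with l < +∞ such that: (i) for every η ∈ K the limit lim_{t→∞} J(t,η) exists in the extended reals and is ≤ l; (ii) lim_{t→∞} J(t,u⁰) = l; (iii) lim_{t→∞} sup_{η∈K} J(t,η) = l. In particular lim_{t→∞} sup_{η∈K} J(t,η) = sup_{η∈K} lim_{t→∞} J(t,η) = lim_{t→∞} J(t,u⁰). -/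

import Mathlib

open Filter Topology

/-- ε-approximation for `EReal`: if `r - ε ≤ y` for all positive `ε`, then `r ≤ y`. -/
lemma ereal_le_of_forall_sub (r : ℝ) (y : EReal)
    (h : ∀ ε : ℝ, 0 < ε → ((r - ε : ℝ) : EReal) ≤ y) : (r : EReal) ≤ y := by
  induction y using EReal.rec with
  | bot => exact absurd (le_bot_iff.mp (h 1 one_pos)) (EReal.coe_ne_bot _)
  | coe s =>
    rw [EReal.coe_le_coe_iff]
    refine le_of_forall_pos_le_add fun ε hε => ?_
    have h2 := (EReal.coe_le_coe_iff).mp (h ε hε)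
    linarith
  | top => exact le_top

/-- Key lemma: a real function satisfying the one-sided condition
`f t ≤ f T + ω T` for `0 ≤ T ≤ t` with `ω → 0` converges in `EReal`
to its `limsup`, which is not `⊤`. -/
lemma key_lemma (f : ℝ → ℝ) (ω : ℝ → ℝ) (hω : Tendsto ω atTop (𝓝 0))
    (hf : ∀ T t : ℝ, 0 ≤ T → T ≤ t → f t ≤ f T + ω T) :
    Tendsto (fun t => ((f t : ℝ) : EReal)) atTop
      (𝓝 (limsup (fun t => ((f t : ℝ) : EReal)) atTop)) ∧
    limsup (fun t => ((f t : ℝ) : EReal)) atTop ≠ ⊤ := by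
  set L := limsup (fun t => ((f t : ℝ) : EReal)) atTop with hL
  have hub : ∀ T : ℝ, 0 ≤ T → L ≤ ((f T + ω T : ℝ) : EReal) := by
    intro T hT
    refine limsup_le_of_le (by isBoundedDefault) ?_
    filter_upwards [eventually_ge_atTop T] with t ht
    exact_mod_cast hf T t hT ht
  have hne : L ≠ ⊤ := by
    intro h
    have h2 := hub 0 le_rfl
    rw [h] at h2
    exact absurd h2 (not_le.mpr (EReal.coe_lt_top _))
  have hlow : L ≤ liminf (fun t => ((f t : ℝ) : EReal)) atTop := by
    by_cases hbot : L = ⊥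
    · rw [hbot]; exact bot_le
    · have hr : ((L.toReal : ℝ) : EReal) = L := EReal.coe_toReal hne hbot
      rw [← hr]
      refine ereal_le_of_forall_sub _ _ fun ε hε => ?_
      refine le_liminf_of_le (by isBoundedDefault) ?_
      have hev : ∀ᶠ T in atTop, ω T ≤ ε := by
        have := hω.eventually (eventually_le_nhds hε)
        simpa using this
      filter_upwards [hev, eventually_ge_atTop (0 : ℝ)] with T h1 h2
      have h3 := hub T h2
      rw [← hr] at h3
      have h4 : L.toReal ≤ f T + ω T := by exact_mod_cast h3
      have h5 : L.toReal - ε ≤ f T := by linarith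
      exact_mod_cast h5
  exact ⟨tendsto_of_liminf_eq_limsup (le_antisymm (liminf_le_limsup) hlow) rfl, hne⟩

/-- Abstract form of Proposition 1(4) of the paper: on a nonempty compact metrizable
space `K`, if `J(t,·)` is continuous for every `t ≥ 0` and
`J(t,η) ≤ J(T,η) + ω(T)` for all `0 ≤ T ≤ t` with `ω(T) → 0`, then there exist a
uniformly overtaking optimal element `u⁰ ∈ K` and `l ∈ EReal`, `l ≠ +∞`, such that
every `J(·,η)` has a limit `Lfun η ≤ l` at infinity, `J(·,u⁰) → l`,
`sup_{η} J(t,η) → l`, and `⨆ η, Lfun η = l`. -/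
theorem stmt_1 {K : Type*} [TopologicalSpace K] [CompactSpace K]
    [TopologicalSpace.MetrizableSpace K] [Nonempty K]
    (J : ℝ → K → ℝ)
    (hJc : ∀ t : ℝ, 0 ≤ t → Continuous fun η => J t η)
    (ω : ℝ → ℝ) (hω : Tendsto ω atTop (𝓝 0))
    (hmono : ∀ (η : K) (T t : ℝ), 0 ≤ T → T ≤ t → J t η ≤ J T η + ω T) :
    ∃ (u0 : K) (l : EReal) (Lfun : K → EReal),
      l ≠ ⊤ ∧
      (∀ η : K, Tendsto (fun t => ((J t η : ℝ) : EReal)) atTop (𝓝 (Lfun η))) ∧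
      (∀ η : K, Lfun η ≤ l) ∧
      Tendsto (fun t => ((J t u0 : ℝ) : EReal)) atTop (𝓝 l) ∧
      Tendsto (fun t => (((⨆ η : K, J t η) : ℝ) : EReal)) atTop (𝓝 l) ∧
      (⨆ η : K, Lfun η) = l := by
  classical
  letI : MetricSpace K := TopologicalSpace.metrizableSpaceMetric K
  -- maximizers of `J t ·`
  have hE : ∀ t : ℝ, 0 ≤ t → ∃ η : K, ∀ η' : K, J t η' ≤ J t η := by
    intro t ht
    obtain ⟨η, -, hη⟩ := isCompact_univ.exists_isMaxOn Set.univ_nonempty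
      (hJc t ht).continuousOn
    exact ⟨η, fun η' => hη (Set.mem_univ η')⟩
  set E : ℝ → K := fun t => if h : 0 ≤ t then (hE t h).choose else Classical.arbitrary K
    with hEdef
  have hEmax : ∀ t : ℝ, 0 ≤ t → ∀ η : K, J t η ≤ J t (E t) := by
    intro t ht η
    simp only [hEdef, dif_pos ht]
    exact (hE t ht).choose_spec η
  set V : ℝ → ℝ := fun t => ⨆ η : K, J t η with hVdef
  have hVb : ∀ t : ℝ, 0 ≤ t → BddAbove (Set.range (fun η : K => J t η)) := by
    intro t ht
    exact ⟨J t (E t), Set.forall_mem_range.mpr (hEmax t ht)⟩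
  have hVeq : ∀ t : ℝ, 0 ≤ t → V t = J t (E t) := by
    intro t ht
    exact le_antisymm (ciSup_le (hEmax t ht)) (le_ciSup (hVb t ht) (E t))
  have hJleV : ∀ t : ℝ, 0 ≤ t → ∀ η : K, J t η ≤ V t := fun t ht η =>
    le_ciSup (hVb t ht) η
  have hVmono : ∀ T t : ℝ, 0 ≤ T → T ≤ t → V t ≤ V T + ω T := by
    intro T t hT hTt
    have ht : (0:ℝ) ≤ t := hT.trans hTt
    calc V t = J t (E t) := hVeq t ht
      _ ≤ J T (E t) + ω T := hmono (E t) T t hT hTt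
      _ ≤ V T + ω T := by linarith [hJleV T hT (E t)]
  obtain ⟨tendsV, hlne⟩ := key_lemma V ω hω hVmono
  set l : EReal := limsup (fun t => ((V t : ℝ) : EReal)) atTop with hldef
  set Lfun : K → EReal := fun η => limsup (fun t => ((J t η : ℝ) : EReal)) atTop
    with hLdef
  have hJtends : ∀ η : K, Tendsto (fun t => ((J t η : ℝ) : EReal)) atTop (𝓝 (Lfun η)) :=
    fun η => (key_lemma (fun t => J t η) ω hω (fun T t hT hTt => hmono η T t hT hTt)).1
  have hLle : ∀ η : K, Lfun η ≤ l := by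
    intro η
    refine limsup_le_limsup ?_ (by isBoundedDefault) (by isBoundedDefault)
    filter_upwards [eventually_ge_atTop (0:ℝ)] with t ht
    exact_mod_cast hJleV t ht η
  -- a convergent subsequence of maximizers
  obtain ⟨u0, φ, hφ, hconv⟩ := CompactSpace.tendsto_subseq (fun n : ℕ => E n)
  -- `l ≤ J T u0 + ω T` for all `T ≥ 0`
  have hkey : ∀ T : ℝ, 0 ≤ T → l ≤ ((J T u0 + ω T : ℝ) : EReal) := by
    intro T hT
    have h1 : Tendsto (fun k : ℕ => ((V ((φ k : ℕ) : ℝ) : ℝ) : EReal)) atTop (𝓝 l) :=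
      tendsV.comp (tendsto_natCast_atTop_atTop.comp hφ.tendsto_atTop)
    have h2 : Tendsto (fun k : ℕ => ((J T (E ((φ k : ℕ) : ℝ)) + ω T : ℝ) : EReal)) atTop
        (𝓝 ((J T u0 + ω T : ℝ) : EReal)) := by
      apply (EReal.continuous_coe_iff.mpr continuous_id).continuousAt.tendsto.comp
      exact (((hJc T hT).tendsto u0).comp hconv).add_const (ω T)
    refine le_of_tendsto_of_tendsto h1 h2 ?_
    have hev : ∀ᶠ k : ℕ in atTop, T ≤ ((φ k : ℕ) : ℝ) := by
      have : Tendsto (fun k : ℕ => ((φ k : ℕ) : ℝ)) atTop atTop :=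
        tendsto_natCast_atTop_atTop.comp hφ.tendsto_atTop
      exact this.eventually_ge_atTop T
    filter_upwards [hev] with k hk
    have hk0 : (0:ℝ) ≤ ((φ k : ℕ) : ℝ) := Nat.cast_nonneg _
    have : V ((φ k : ℕ) : ℝ) ≤ J T (E ((φ k : ℕ) : ℝ)) + ω T := by
      calc V ((φ k : ℕ) : ℝ) = J ((φ k : ℕ) : ℝ) (E ((φ k : ℕ) : ℝ)) := hVeq _ hk0
        _ ≤ J T (E ((φ k : ℕ) : ℝ)) + ω T := hmono _ T _ hT hk
    exact_mod_cast this
  -- `l ≤ Lfun u0`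
  have hgel : l ≤ Lfun u0 := by
    by_cases hbot : l = ⊥
    · rw [hbot]; exact bot_le
    · have hr : ((l.toReal : ℝ) : EReal) = l := EReal.coe_toReal hlne hbot
      rw [← hr]
      refine ereal_le_of_forall_sub _ _ fun ε hε => ?_
      have hlim : liminf (fun t => ((J t u0 : ℝ) : EReal)) atTop = Lfun u0 :=
        (hJtends u0).liminf_eq
      rw [← hlim]
      refine le_liminf_of_le (by isBoundedDefault) ?_
      have hev : ∀ᶠ T in atTop, ω T ≤ ε := by
        have := hω.eventually (eventually_le_nhds hε)
        simpa using this
      filter_upwards [hev, eventually_ge_atTop (0:ℝ)] with T h1 h2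
      have h3 := hkey T h2
      rw [← hr] at h3
      have h4 : l.toReal ≤ J T u0 + ω T := by exact_mod_cast h3
      have h5 : l.toReal - ε ≤ J T u0 := by linarith
      exact_mod_cast h5
  have hLeq : Lfun u0 = l := le_antisymm (hLle u0) hgel
  refine ⟨u0, l, Lfun, hlne, hJtends, hLle, ?_, tendsV, ?_⟩
  · rw [← hLeq]; exact hJtends u0
  · exact le_antisymm (iSup_le hLle) (hLeq ▸ le_iSup Lfun u0)
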